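/- arXiv:1205.0266 — 3 statements merged into one kernel-verified Lean document; each statement's English description precedes it below -/
import Mathlib

section
/- Let 0 → E' → E → E'' → 0 be a short exact sequence of finite free modules over a commutative ring. Then in the Grothendieck group K_0, the class λ_{-1}(E) := Σ_i (-1)^i [Λ^i E] satisfies λ_{-1}(E) = λ_{-1}(E') · λ_{-1}(E''), where multiplication is induced by tensor product. -/
open CategoryTheory

section ExteriorPowerBasis

open ExteriorAlgebra

variable {R : Type*} [CommRing R] {M : Type*} [AddCommGroup M] [Module R M]
variable {r : ℕ} (b : Module.Basis (Fin r) R M) (n : ℕ)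

/-- The candidate basis vectors of the `n`-th exterior power. -/
noncomputable def extVec (s : {s : Finset (Fin r) // s.card = n}) : Fin n → M :=
  fun i => b (s.1.orderIsoOfFin s.2 i)

/-- The coordinate alternating form associated to an `n`-element subset of `Fin r`. -/
noncomputable def extCoordForm (s : {s : Finset (Fin r) // s.card = n}) :
    M [⋀^Fin n]→ₗ[R] R :=
  Matrix.detRowAlternating.compLinearMap (LinearMap.pi fun i => b.coord (s.1.orderIsoOfFin s.2 i))

lemma extCoordForm_extVec (s t : {s : Finset (Fin r) // s.card = n}) :
    extCoordForm b n s (extVec b n t) = if s = t then 1 else 0 := by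
  classical
  rw [extCoordForm, AlternatingMap.compLinearMap_apply]
  show Matrix.det (Matrix.of fun i j =>
    b.repr (b (t.1.orderIsoOfFin t.2 i)) (s.1.orderIsoOfFin s.2 j)) = _
  by_cases h : s = t
  · subst h
    rw [if_pos rfl]
    have : (Matrix.of fun i j =>
        b.repr (b (s.1.orderIsoOfFin s.2 i)) (s.1.orderIsoOfFin s.2 j))
        = (1 : Matrix (Fin n) (Fin n) R) := by
      ext i j
      rw [Matrix.of_apply, Module.Basis.repr_self_apply, Matrix.one_apply]
      rcases eq_or_ne i j with hij | hij
      · simp [hij]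
      · rw [if_neg hij, if_neg]
        intro hc
        exact hij (((s.1.orderIsoOfFin s.2).injective (Subtype.ext hc)))
    rw [this, Matrix.det_one]
  · rw [if_neg h]
    have hst : ¬ (s.1 ⊆ t.1) := by
      intro hsub
      exact h (Subtype.ext (Finset.eq_of_subset_of_card_le hsub (by rw [s.2, t.2])))
    obtain ⟨x, hxs, hxt⟩ := Finset.not_subset.mp hst
    refine Matrix.det_eq_zero_of_column_eq_zero ((s.1.orderIsoOfFin s.2).symm ⟨x, hxs⟩) fun i => ?_
    rw [Matrix.of_apply, Module.Basis.repr_self_apply, if_neg]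
    intro hEq
    apply hxt
    simp only [OrderIso.apply_symm_apply] at hEq
    exact hEq ▸ (t.1.orderIsoOfFin t.2 i).2

/-- The linear functional on the exterior algebra extracting the coordinate of `extVec s`. -/
noncomputable def extLift (s : {s : Finset (Fin r) // s.card = n}) :
    ExteriorAlgebra R M →ₗ[R] R :=
  ExteriorAlgebra.liftAlternating
    (Function.update (fun i => (0 : M [⋀^Fin i]→ₗ[R] R)) n (extCoordForm b n s))

lemma extLift_ιMulti (s : {s : Finset (Fin r) // s.card = n}) (v : Fin n → M) :
    extLift b n s (ExteriorAlgebra.ιMulti R n v) = extCoordForm b n s v := by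
  have h := ExteriorAlgebra.liftAlternating_comp_ιMulti (n := n)
    (Function.update (fun i => (0 : M [⋀^Fin i]→ₗ[R] R)) n (extCoordForm b n s))
  have h2 := DFunLike.congr_fun h v
  simpa [extLift, Function.update_self] using h2

lemma extVec_linearIndependent :
    LinearIndependent R fun s : {s : Finset (Fin r) // s.card = n} =>
      ExteriorAlgebra.ιMulti R n (extVec b n s) := by
  classical
  rw [Fintype.linearIndependent_iff]
  intro g hg s
  have := congrArg (extLift b n s) hg
  rw [map_sum, map_zero] at this
  simp only [map_smul, extLift_ιMulti, extCoordForm_extVec, smul_eq_mul] at this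
  rw [Finset.sum_eq_single s] at this
  · simpa using this
  · intro t _ hts
    rw [if_neg (Ne.symm hts), mul_zero]
  · intro h; exact absurd (Finset.mem_univ s) h

lemma extVec_span :
    Submodule.span R (Set.range fun s : {s : Finset (Fin r) // s.card = n} =>
      ExteriorAlgebra.ιMulti R n (extVec b n s)) = ⋀[R]^n M := by
  classical
  refine le_antisymm (Submodule.span_le.2 ?_) ?_
  · rintro _ ⟨s, rfl⟩
    exact ExteriorAlgebra.ιMulti_range R n (Set.mem_range_self _)
  rw [← ExteriorAlgebra.ιMulti_span_fixedDegree, Submodule.span_le]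
  rintro _ ⟨v, rfl⟩
  have hv : v = fun i => ∑ j : Fin r, b.repr (v i) j • b j := by
    funext i; rw [Module.Basis.sum_repr]
  rw [hv]
  have hmap := (ExteriorAlgebra.ιMulti R n (M := M)).toMultilinearMap.map_sum
    (g := fun (i : Fin n) (j : Fin r) => b.repr (v i) j • b j)
  rw [show ((ExteriorAlgebra.ιMulti R n) fun i => ∑ j : Fin r, b.repr (v i) j • b j) =
      (ExteriorAlgebra.ιMulti R n (M := M)).toMultilinearMap
        fun i => ∑ j : Fin r, b.repr (v i) j • b j from rfl, hmap]
  refine Submodule.sum_mem _ fun k _ => ?_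
  rw [MultilinearMap.map_smul_univ]
  refine Submodule.smul_mem _ _ ?_
  show ExteriorAlgebra.ιMulti R n (fun i => b (k i)) ∈ _
  by_cases hk : Function.Injective k
  · set s : Finset (Fin r) := Finset.univ.image k with hs
    have hcard : s.card = n := by
      rw [hs, Finset.card_image_of_injective _ hk, Finset.card_univ, Fintype.card_fin]
    set sc : {s : Finset (Fin r) // s.card = n} := ⟨s, hcard⟩ with hsc
    have hmem : ∀ i, k i ∈ s := fun i => Finset.mem_image_of_mem k (Finset.mem_univ i)
    let τ : Fin n ≃ {x // x ∈ s} := Equiv.ofBijective (fun i => ⟨k i, hmem i⟩)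
      (by
        constructor
        · intro i j hij
          exact hk (congrArg Subtype.val hij)
        · intro ⟨x, hx⟩
          obtain ⟨i, _, hi⟩ := Finset.mem_image.mp hx
          exact ⟨i, Subtype.ext hi⟩)
    let σ : Equiv.Perm (Fin n) := τ.trans (s.orderIsoOfFin hcard).toEquiv.symm
    have hcomp : (fun i => b (k i)) = extVec b n sc ∘ σ := by
      funext i
      show b (k i) = b ((s.orderIsoOfFin hcard) ((s.orderIsoOfFin hcard).symm (τ i)))
      rw [OrderIso.apply_symm_apply]
      rfl
    rw [hcomp, AlternatingMap.map_perm]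
    exact Submodule.smul_mem _ _ (Submodule.subset_span (Set.mem_range_self sc))
  · rw [AlternatingMap.map_eq_zero_of_not_injective _ _
      (fun hinj => hk (fun i j hij => hinj (by simp [hij])))]
    exact Submodule.zero_mem _

/-- A basis of the `n`-th exterior power of a module with a finite basis, indexed by the
`n`-element subsets of the index set. -/
noncomputable def exteriorPowerBasis :
    Module.Basis {s : Finset (Fin r) // s.card = n} R (⋀[R]^n M) := by
  refine Module.Basis.mk (v := fun s => ⟨ExteriorAlgebra.ιMulti R n (extVec b n s),
    ExteriorAlgebra.ιMulti_range R n (Set.mem_range_self _)⟩) ?_ ?_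
  · apply LinearIndependent.of_comp (⋀[R]^n M).subtype
    exact extVec_linearIndependent b n
  · have hinj := Submodule.injective_subtype (⋀[R]^n M)
    have : Submodule.map (⋀[R]^n M).subtype (Submodule.span R (Set.range fun s =>
        (⟨ExteriorAlgebra.ιMulti R n (extVec b n s), ExteriorAlgebra.ιMulti_range R n
          (Set.mem_range_self _)⟩ : ⋀[R]^n M))) = Submodule.map (⋀[R]^n M).subtype ⊤ := by
      rw [Submodule.map_span, Submodule.map_subtype_top, ← Set.range_comp]
      exact extVec_span b n
    exact (Submodule.map_injective_of_injective hinj this).ge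

end ExteriorPowerBasis

/-- The set of relations defining the Grothendieck group `K₀` of finitely generated
projective modules: for every short exact sequence `0 → A → B → C → 0` of finite
projective modules, we impose `[B] = [A] + [C]`. -/
def K0Rels (R : Type) [CommRing R] : AddSubgroup (FreeAbelianGroup (ModuleCat.{0} R)) :=
  AddSubgroup.closure
    {x | ∃ (A B C : ModuleCat.{0} R),
      Module.Finite R A ∧ Module.Projective R A ∧
      Module.Finite R B ∧ Module.Projective R B ∧
      Module.Finite R C ∧ Module.Projective R C ∧
      ∃ (f : A →ₗ[R] B) (g : B →ₗ[R] C),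
        Function.Injective f ∧ Function.Surjective g ∧ Function.Exact f g ∧
        x = FreeAbelianGroup.of B - FreeAbelianGroup.of A - FreeAbelianGroup.of C}

/-- The Grothendieck group `K₀(R)` of finite projective `R`-modules. -/
def K0 (R : Type) [CommRing R] : Type 1 :=
  FreeAbelianGroup (ModuleCat.{0} R) ⧸ K0Rels R

noncomputable instance (R : Type) [CommRing R] : AddCommGroup (K0 R) :=
  QuotientAddGroup.Quotient.addCommGroup _

/-- The class of a module in `K₀(R)`. -/
def K0.cls (R : Type) [CommRing R] (M : Type) [AddCommGroup M] [Module R M] : K0 R :=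
  QuotientAddGroup.mk (FreeAbelianGroup.of (ModuleCat.of R M))

section K0Lemmas

variable (R : Type) [CommRing R]

lemma K0.cls_rel (A B C : Type)
    [AddCommGroup A] [Module R A] [AddCommGroup B] [Module R B] [AddCommGroup C] [Module R C]
    [Module.Finite R A] [Module.Projective R A] [Module.Finite R B] [Module.Projective R B]
    [Module.Finite R C] [Module.Projective R C]
    (f : A →ₗ[R] B) (g : B →ₗ[R] C)
    (hf : Function.Injective f) (hg : Function.Surjective g) (hfg : Function.Exact f g) :
    K0.cls R B = K0.cls R A + K0.cls R C := by
  show (QuotientAddGroup.mk _ : FreeAbelianGroup (ModuleCat.{0} R) ⧸ K0Rels R) =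
    (QuotientAddGroup.mk _ + QuotientAddGroup.mk _ : FreeAbelianGroup (ModuleCat.{0} R) ⧸ K0Rels R)
  erw [← QuotientAddGroup.mk_add, QuotientAddGroup.eq]
  have hmem : FreeAbelianGroup.of (ModuleCat.of R B) - FreeAbelianGroup.of (ModuleCat.of R A)
      - FreeAbelianGroup.of (ModuleCat.of R C) ∈ K0Rels R := by
    apply AddSubgroup.subset_closure
    exact ⟨ModuleCat.of R A, ModuleCat.of R B, ModuleCat.of R C,
      ‹_›, ‹_›, ‹_›, ‹_›, ‹_›, ‹_›, f, g, hf, hg, hfg, rfl⟩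
  have := neg_mem hmem
  convert this using 1
  abel

lemma K0.cls_eq_punit_add (M N : Type)
    [AddCommGroup M] [Module R M] [AddCommGroup N] [Module R N]
    [Module.Finite R M] [Module.Projective R M] [Module.Finite R N] [Module.Projective R N]
    (e : M ≃ₗ[R] N) : K0.cls R M = K0.cls R PUnit + K0.cls R N := by
  refine K0.cls_rel R PUnit M N (0 : PUnit →ₗ[R] M) (e : M →ₗ[R] N)
    (Function.injective_of_subsingleton _) e.surjective ?_
  rw [LinearMap.exact_iff]
  rw [LinearMap.ker_eq_bot.mpr e.injective, LinearMap.range_zero]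

lemma K0.cls_punit : K0.cls R PUnit = 0 :=
  left_eq_add.mp (K0.cls_eq_punit_add R PUnit PUnit (LinearEquiv.refl R PUnit))

lemma K0.cls_congr (A B : Type)
    [AddCommGroup A] [Module R A] [AddCommGroup B] [Module R B]
    [Module.Finite R A] [Module.Projective R A] [Module.Finite R B] [Module.Projective R B]
    (e : A ≃ₗ[R] B) : K0.cls R A = K0.cls R B := by
  rw [K0.cls_eq_punit_add R A B e, K0.cls_punit, zero_add]

lemma K0.cls_of_subsingleton [Subsingleton R] (M : Type) [AddCommGroup M] [Module R M] :
    K0.cls R M = 0 := by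
  haveI : Subsingleton M := Module.subsingleton R M
  haveI : Module.Free R M := Module.Free.of_basis (Module.Basis.empty (ι := PEmpty.{1}) M)
  haveI : Module.Finite R M := Module.Finite.of_basis (Module.Basis.empty (ι := PEmpty.{1}) M)
  rw [K0.cls_congr R M PUnit (LinearEquiv.ofSubsingleton M PUnit), K0.cls_punit]

lemma K0.cls_prod (A B : Type)
    [AddCommGroup A] [Module R A] [AddCommGroup B] [Module R B]
    [Module.Finite R A] [Module.Projective R A] [Module.Finite R B] [Module.Projective R B] :
    K0.cls R (A × B) = K0.cls R A + K0.cls R B :=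
  K0.cls_rel R A (A × B) B (LinearMap.inl R A B) (LinearMap.snd R A B)
    LinearMap.inl_injective LinearMap.snd_surjective Function.Exact.inl_snd

lemma K0.cls_pi_fin (n : ℕ) : K0.cls R (Fin n → R) = n • K0.cls R R := by
  induction n with
  | zero =>
      rw [zero_smul]
      haveI : Subsingleton (Fin 0 → R) := by
        constructor; intro a b; funext i; exact absurd i.2 (by omega)
      rw [K0.cls_congr R (Fin 0 → R) PUnit (LinearEquiv.ofSubsingleton _ _), K0.cls_punit]
  | succ n ih =>
      have e1 : (Fin (n + 1) → R) ≃ₗ[R] (Fin 1 ⊕ Fin n → R) :=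
        LinearEquiv.funCongrLeft R R ((finSumFinEquiv (m := 1) (n := n)).trans (finCongr (by omega)))
      have e2 : (Fin 1 ⊕ Fin n → R) ≃ₗ[R] (Fin 1 → R) × (Fin n → R) :=
        LinearEquiv.sumArrowLequivProdArrow _ _ R R
      have e3 : ((Fin 1 → R) × (Fin n → R)) ≃ₗ[R] R × (Fin n → R) :=
        LinearEquiv.prodCongr (LinearEquiv.funUnique (Fin 1) R R) (LinearEquiv.refl R (Fin n → R))
      have e : (Fin (n + 1) → R) ≃ₗ[R] R × (Fin n → R) := e1 ≪≫ₗ e2 ≪≫ₗ e3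
      rw [K0.cls_congr R _ _ e, K0.cls_prod, ih, succ_nsmul, add_comm]

lemma K0.cls_free [Nontrivial R] (M : Type) [AddCommGroup M] [Module R M]
    [Module.Free R M] [Module.Finite R M] :
    K0.cls R M = (Module.finrank R M) • K0.cls R R := by
  classical
  let b := Module.Free.chooseBasis R M
  let c := Fintype.card (Module.Free.ChooseBasisIndex R M)
  have e : M ≃ₗ[R] (Fin c → R) :=
    b.equivFun.trans (LinearEquiv.funCongrLeft R R (Fintype.equivFin _).symm)
  rw [K0.cls_congr R M (Fin c → R) e, K0.cls_pi_fin,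
    Module.finrank_eq_card_chooseBasisIndex R M]

end K0Lemmas

open Finset TensorProduct in
/-- **Multiplicativity of `λ₋₁` on short exact sequences.**
For a short exact sequence `0 → E' → E → E'' → 0` of finite free modules over a
commutative ring, one has `λ₋₁(E) = λ₋₁(E') · λ₋₁(E'')` in `K₀(R)`, where
`λ₋₁(E) = Σᵢ (-1)ⁱ [Λⁱ E]` and the product is induced by the tensor product, i.e.
`Σₙ (-1)ⁿ [Λⁿ E] = Σᵢ Σⱼ (-1)^(i+j) [Λⁱ E' ⊗ Λʲ E'']`. -/
theorem lambdaMinusOne_multiplicative_of_shortExact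
    (R : Type) [CommRing R]
    (E' E E'' : Type) [AddCommGroup E'] [AddCommGroup E] [AddCommGroup E'']
    [Module R E'] [Module R E] [Module R E'']
    [Module.Free R E'] [Module.Finite R E'] [Module.Free R E] [Module.Finite R E]
    [Module.Free R E''] [Module.Finite R E'']
    (f : E' →ₗ[R] E) (g : E →ₗ[R] E'')
    (hf : Function.Injective f) (hg : Function.Surjective g) (hfg : Function.Exact f g) :
    ∑ n ∈ range (Module.finrank R E + 1), ((-1 : ℤ) ^ n) • K0.cls R ↥(⋀[R]^n E) =
      ∑ i ∈ range (Module.finrank R E' + 1), ∑ j ∈ range (Module.finrank R E'' + 1),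
        ((-1 : ℤ) ^ (i + j)) • K0.cls R (↥(⋀[R]^i E') ⊗[R] ↥(⋀[R]^j E'')) := by
  classical
  rcases subsingleton_or_nontrivial R with hR | hR
  · simp [K0.cls_of_subsingleton]
  -- nontrivial case
  set a := Module.finrank R E' with ha
  set b := Module.finrank R E'' with hb
  -- the sequence splits, so finrank E = a + b
  have hE : Module.finrank R E = a + b := by
    obtain ⟨s, hs⟩ := Module.projective_lifting_property g LinearMap.id hg
    have e : E ≃ₗ[R] E' × E'' := ((hfg.splitSurjectiveEquiv hf) ⟨s, hs⟩).1
    rw [e.finrank_eq, Module.finrank_prod]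
  -- bases
  have bE : Module.Basis (Fin (a + b)) R E :=
    (Module.Free.chooseBasis R E).reindex (Fintype.equivFinOfCardEq
      (by rw [← Module.finrank_eq_card_chooseBasisIndex, hE]))
  have bE' : Module.Basis (Fin a) R E' :=
    (Module.Free.chooseBasis R E').reindex (Fintype.equivFinOfCardEq
      (by rw [← Module.finrank_eq_card_chooseBasisIndex]))
  have bE'' : Module.Basis (Fin b) R E'' :=
    (Module.Free.chooseBasis R E'').reindex (Fintype.equivFinOfCardEq
      (by rw [← Module.finrank_eq_card_chooseBasisIndex]))
  -- exterior powers are free of binomial rank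
  have hcls : ∀ (N : Type) (_ : AddCommGroup N) (_ : Module R N) (r : ℕ)
      (bN : Module.Basis (Fin r) R N) (n : ℕ),
      K0.cls R ↥(⋀[R]^n N) = (r.choose n) • K0.cls R R := by
    intro N _ _ r bN n
    haveI : Module.Free R ↥(⋀[R]^n N) := Module.Free.of_basis (exteriorPowerBasis bN n)
    haveI : Module.Finite R ↥(⋀[R]^n N) := Module.Finite.of_basis (exteriorPowerBasis bN n)
    rw [K0.cls_free, Module.finrank_eq_card_basis (exteriorPowerBasis bN n),
      Fintype.card_finset_len, Fintype.card_fin]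
  -- classes of the tensor products
  have hT : ∀ i j, K0.cls R (↥(⋀[R]^i E') ⊗[R] ↥(⋀[R]^j E''))
      = (a.choose i * b.choose j) • K0.cls R R := by
    intro i j
    haveI : Module.Free R ↥(⋀[R]^i E') := Module.Free.of_basis (exteriorPowerBasis bE' i)
    haveI : Module.Finite R ↥(⋀[R]^i E') := Module.Finite.of_basis (exteriorPowerBasis bE' i)
    haveI : Module.Free R ↥(⋀[R]^j E'') := Module.Free.of_basis (exteriorPowerBasis bE'' j)
    haveI : Module.Finite R ↥(⋀[R]^j E'') := Module.Finite.of_basis (exteriorPowerBasis bE'' j)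
    rw [K0.cls_free, Module.finrank_tensorProduct,
      Module.finrank_eq_card_basis (exteriorPowerBasis bE' i),
      Module.finrank_eq_card_basis (exteriorPowerBasis bE'' j),
      Fintype.card_finset_len, Fintype.card_finset_len, Fintype.card_fin, Fintype.card_fin]
  rw [hE]
  have lhs_eq : (∑ n ∈ range (a + b + 1), ((-1 : ℤ) ^ n) • K0.cls R ↥(⋀[R]^n E))
      = (∑ n ∈ range (a + b + 1), (-1 : ℤ) ^ n * ((a + b).choose n : ℤ)) • K0.cls R R := by
    rw [Finset.sum_smul]
    refine Finset.sum_congr rfl fun n _ => ?_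
    have hx := hcls E ‹_› ‹_› (a + b) bE n
    rw [hx, ← natCast_zsmul, smul_smul]
  have rhs_eq : (∑ i ∈ range (a + 1), ∑ j ∈ range (b + 1),
        ((-1 : ℤ) ^ (i + j)) • K0.cls R (↥(⋀[R]^i E') ⊗[R] ↥(⋀[R]^j E'')))
      = (∑ i ∈ range (a + 1), ∑ j ∈ range (b + 1),
          (-1 : ℤ) ^ (i + j) * ((a.choose i : ℤ) * (b.choose j : ℤ))) • K0.cls R R := by
    rw [Finset.sum_smul]
    refine Finset.sum_congr rfl fun i _ => ?_
    rw [Finset.sum_smul]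
    refine Finset.sum_congr rfl fun j _ => ?_
    rw [hT i j, ← natCast_zsmul, smul_smul]
    norm_cast
  rw [lhs_eq, rhs_eq]
  congr 1
  have hsum : (∑ i ∈ range (a + 1), ∑ j ∈ range (b + 1),
        (-1 : ℤ) ^ (i + j) * ((a.choose i : ℤ) * (b.choose j : ℤ)))
      = (∑ i ∈ range (a + 1), (-1 : ℤ) ^ i * (a.choose i : ℤ))
        * (∑ j ∈ range (b + 1), (-1 : ℤ) ^ j * (b.choose j : ℤ)) := by
    rw [Finset.sum_mul_sum]
    refine Finset.sum_congr rfl fun i _ => Finset.sum_congr rfl fun j _ => ?_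
    rw [pow_add]
    ring
  rw [hsum, Int.alternating_sum_range_choose, Int.alternating_sum_range_choose,
    Int.alternating_sum_range_choose]
  rcases a with _ | a <;> rcases b with _ | b <;> simp
end

section
/- Let 0 → V' → V → V'' → 0 be an exact sequence of finite projective modules over a commutative ring R, and suppose V' admits a nowhere-vanishing section s : R → V'. Then under the multiplicativity isomorphism λ_{-1}(V^∨) = λ_{-1}(V'^∨) · λ_{-1}(V''^∨) in K_0(R), both λ_{-1}(V^∨) and λ_{-1}(V'^∨) vanish, and the two resulting trivializations of λ_{-1}(V^∨) agree: λ_{-1}(V^∨) = 0 · λ_{-1}(V''^∨) = 0. -/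
open CategoryTheory

namespace KoszulAux
variable (R : Type) [CommRing R]

theorem cls_rel {A B C : Type} [AddCommGroup A] [Module R A] [AddCommGroup B] [Module R B]
    [AddCommGroup C] [Module R C]
    [Module.Finite R A] [Module.Projective R A] [Module.Finite R B] [Module.Projective R B]
    [Module.Finite R C] [Module.Projective R C]
    (f : A →ₗ[R] B) (g : B →ₗ[R] C) (hf : Function.Injective f) (hg : Function.Surjective g)
    (hfg : Function.Exact f g) : K0.cls R B = K0.cls R A + K0.cls R C := by
  have h : (FreeAbelianGroup.of (ModuleCat.of R B) - FreeAbelianGroup.of (ModuleCat.of R A)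
      - FreeAbelianGroup.of (ModuleCat.of R C)) ∈ K0Rels R :=
    AddSubgroup.subset_closure ⟨ModuleCat.of R A, ModuleCat.of R B, ModuleCat.of R C,
      ‹_›, ‹_›, ‹_›, ‹_›, ‹_›, ‹_›, f, g, hf, hg, hfg, rfl⟩
  have h2 : ((FreeAbelianGroup.of (ModuleCat.of R B) - FreeAbelianGroup.of (ModuleCat.of R A)
      - FreeAbelianGroup.of (ModuleCat.of R C) : FreeAbelianGroup (ModuleCat.{0} R)) :
      FreeAbelianGroup (ModuleCat.{0} R) ⧸ K0Rels R) = 0 :=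
    (QuotientAddGroup.eq_zero_iff _).mpr h
  rw [QuotientAddGroup.mk_sub, QuotientAddGroup.mk_sub, sub_sub, sub_eq_zero] at h2
  exact h2

theorem finite_of_ss (M : Type) [AddCommGroup M] [Module R M] [Subsingleton M] :
    Module.Finite R M :=
  Module.Finite.of_surjective (0 : R →ₗ[R] M) (fun x => ⟨0, Subsingleton.elim _ _⟩)

theorem projective_of_ss (M : Type) [AddCommGroup M] [Module R M] [Subsingleton M] :
    Module.Projective R M :=
  Module.Projective.of_split (0 : M →ₗ[R] R) (0 : R →ₗ[R] M)
    (by ext x; exact Subsingleton.elim _ _)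

theorem cls_zero_of_ss (M : Type) [AddCommGroup M] [Module R M] [Subsingleton M] :
    K0.cls R M = 0 := by
  have := finite_of_ss R M
  have := projective_of_ss R M
  have h := cls_rel R (LinearMap.id (M := M)) (LinearMap.id (M := M))
    (fun a b _ => Subsingleton.elim a b) (fun x => ⟨x, rfl⟩)
    (fun y => ⟨fun _ => ⟨y, rfl⟩, fun _ => Subsingleton.elim _ _⟩)
  exact add_eq_left.mp h.symm

theorem cls_congr {A B : Type} [AddCommGroup A] [Module R A] [AddCommGroup B] [Module R B]
    [Module.Finite R A] [Module.Projective R A] (e : A ≃ₗ[R] B) :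
    K0.cls R A = K0.cls R B := by
  have : Module.Finite R B := Module.Finite.equiv e
  have : Module.Projective R B := Module.Projective.of_equiv e
  have h1 : Module.Finite R PUnit := finite_of_ss R PUnit
  have h2 : Module.Projective R PUnit := projective_of_ss R PUnit
  have hsurj : Function.Surjective (0 : B →ₗ[R] PUnit) :=
    fun x => ⟨0, Subsingleton.elim _ x⟩
  have h := cls_rel R e.toLinearMap (0 : B →ₗ[R] PUnit) e.injective hsurj
    (fun y => ⟨fun _ => ⟨e.symm y, e.apply_symm_apply y⟩, fun _ => Subsingleton.elim _ _⟩)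
  rw [h, cls_zero_of_ss R PUnit, add_zero]

theorem cls_prod {A C : Type} [AddCommGroup A] [Module R A] [AddCommGroup C] [Module R C]
    [Module.Finite R A] [Module.Projective R A] [Module.Finite R C] [Module.Projective R C] :
    K0.cls R (A × C) = K0.cls R A + K0.cls R C := by
  have : Module.Projective R (A × C) := inferInstance
  exact cls_rel R (LinearMap.inl R A C) (LinearMap.snd R A C)
    (fun a b h => by simpa using congrArg Prod.fst h)
    (fun c => ⟨(0, c), rfl⟩)
    (fun y => by
      constructor
      · intro h; exact ⟨y.1, by ext <;> simp [h.symm]⟩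
      · rintro ⟨a, rfl⟩; rfl)

theorem cls_equiv_prod {A B C : Type} [AddCommGroup A] [Module R A] [AddCommGroup B] [Module R B]
    [AddCommGroup C] [Module R C]
    [Module.Finite R A] [Module.Projective R A] [Module.Finite R B] [Module.Projective R B]
    [Module.Finite R C] [Module.Projective R C] (e : B ≃ₗ[R] A × C) :
    K0.cls R B = K0.cls R A + K0.cls R C := by
  rw [cls_congr R e, cls_prod R]

open ExteriorAlgebra


variable {R : Type} [CommRing R] {M N : Type} [AddCommGroup M] [Module R M]
  [AddCommGroup N] [Module R N]

/-- Contraction (interior product) on the exterior algebra. -/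
noncomputable def ctr (ψ : M →ₗ[R] R) :
    ExteriorAlgebra R M →ₗ[R] ExteriorAlgebra R M :=
  CliffordAlgebra.contractLeft (Q := (0 : QuadraticForm R M)) ψ

theorem ctr_ι_mul (ψ : M →ₗ[R] R) (m : M) (x : ExteriorAlgebra R M) :
    ctr ψ (ι R m * x) = ψ m • x - ι R m * ctr ψ x :=
  CliffordAlgebra.contractLeft_ι_mul ψ m x

theorem ctr_algebraMap (ψ : M →ₗ[R] R) (r : R) :
    ctr ψ (algebraMap R (ExteriorAlgebra R M) r) = 0 :=
  CliffordAlgebra.contractLeft_algebraMap 0 ψ r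

theorem ι_anticomm (a b : M) : ι R a * ι R b = -(ι R b * ι R a) := by
  have h := ι_sq_zero (R := R) (a + b)
  rw [map_add, add_mul, mul_add, mul_add, ι_sq_zero, ι_sq_zero] at h
  rw [zero_add, add_zero] at h
  exact eq_neg_of_add_eq_zero_left h

theorem ι_mul_mem {n : ℕ} (m : M) {x : ExteriorAlgebra R M} (hx : x ∈ ⋀[R]^n M) :
    ι R m * x ∈ ⋀[R]^(n + 1) M := by
  rw [show ⋀[R]^(n+1) M = (LinearMap.range (ι R : M →ₗ[R] _))^(n+1) from rfl, pow_succ']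
  exact Submodule.mul_mem_mul (LinearMap.mem_range_self _ m) hx

theorem expow_zero_mem {x : ExteriorAlgebra R M} (hx : x ∈ ⋀[R]^0 M) :
    ∃ r, algebraMap R (ExteriorAlgebra R M) r = x := by
  rw [show ⋀[R]^0 M = 1 from pow_zero _, Submodule.one_eq_range] at hx
  obtain ⟨r, hr⟩ := hx
  exact ⟨r, hr⟩

theorem ctr_expow_zero (ψ : M →ₗ[R] R) {x : ExteriorAlgebra R M} (hx : x ∈ ⋀[R]^0 M) :
    ctr ψ x = 0 := by
  obtain ⟨r, rfl⟩ := expow_zero_mem hx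
  exact ctr_algebraMap ψ r

theorem ctr_mem (ψ : M →ₗ[R] R) :
    ∀ n, ∀ x ∈ ⋀[R]^(n + 1) M, ctr ψ x ∈ ⋀[R]^n M := by
  intro n
  induction n with
  | zero =>
    intro x hx
    rw [show ⋀[R]^1 M = (LinearMap.range (ι R : M →ₗ[R] _))^1 from rfl, pow_one] at hx
    obtain ⟨m, rfl⟩ := hx
    rw [show (ι R m : ExteriorAlgebra R M) = ι R m * 1 from (mul_one _).symm, ctr_ι_mul]
    rw [show (1 : ExteriorAlgebra R M) = algebraMap R _ 1 from (map_one _).symm, ctr_algebraMap]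
    rw [mul_zero, sub_zero, show ⋀[R]^0 M = 1 from pow_zero _]
    exact Submodule.smul_mem _ _ (Submodule.algebraMap_mem _)
  | succ n ih =>
    intro x hx
    rw [show ⋀[R]^(n+2) M = (LinearMap.range (ι R : M →ₗ[R] _)) * ⋀[R]^(n+1) M from pow_succ' _ _]
      at hx
    refine Submodule.mul_induction_on hx ?_ ?_
    · rintro a ⟨m, rfl⟩ y hy
      rw [ctr_ι_mul]
      exact sub_mem (Submodule.smul_mem _ _ hy) (ι_mul_mem m (ih y hy))
    · intro a b ha hb
      rw [map_add]
      exact add_mem ha hb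

theorem map_mem_pow (f : M →ₗ[R] N) :
    ∀ n, ∀ x ∈ ⋀[R]^n M, map f x ∈ ⋀[R]^n N := by
  intro n
  induction n with
  | zero =>
    intro x hx
    obtain ⟨r, rfl⟩ := expow_zero_mem hx
    rw [show ⋀[R]^0 N = 1 from pow_zero _, AlgHom.commutes]
    exact Submodule.algebraMap_mem _
  | succ n ih =>
    intro x hx
    rw [show ⋀[R]^(n+1) M = (LinearMap.range (ι R : M →ₗ[R] _)) * ⋀[R]^n M from pow_succ' _ _]
      at hx
    refine Submodule.mul_induction_on hx ?_ ?_
    · rintro a ⟨m, rfl⟩ y hy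
      rw [map_mul, map_apply_ι]
      exact ι_mul_mem _ (ih y hy)
    · intro a b ha hb
      rw [map_add]
      exact add_mem ha hb

variable (R) in
/-- The degreewise map on exterior powers induced by a linear map. -/
noncomputable def pmap (f : M →ₗ[R] N) (n : ℕ) : ↥(⋀[R]^n M) →ₗ[R] ↥(⋀[R]^n N) :=
  LinearMap.codRestrict _ ((map f).toLinearMap ∘ₗ (⋀[R]^n M).subtype)
    (fun x => map_mem_pow f n x.1 x.2)

@[simp] theorem pmap_apply_coe (f : M →ₗ[R] N) (n : ℕ) (x : ↥(⋀[R]^n M)) :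
    (pmap R f n x : ExteriorAlgebra R N) = map f (x : ExteriorAlgebra R M) := rfl


theorem ctr_map_eq_zero {W : Type} [AddCommGroup W] [Module R W]
    (ψ : M →ₗ[R] R) (u : W →ₗ[R] M) (hψu : ∀ w, ψ (u w) = 0) :
    ∀ a : ExteriorAlgebra R W, ctr ψ (map u a) = 0 := by
  intro a
  induction a using CliffordAlgebra.left_induction with
  | algebraMap r => rw [AlgHom.commutes]; exact ctr_algebraMap ψ r
  | add x y hx hy => rw [map_add, map_add, hx, hy, add_zero]
  | ι_mul x w hx =>
    rw [map_mul, map_apply_ι, ctr_ι_mul, hψu, hx, zero_smul, mul_zero, sub_zero]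

theorem koszul_identity (j : M →ₗ[R] M) (φ1 : M) (ψ : M →ₗ[R] R)
    (hj : ∀ m, m = j m + ψ m • φ1) :
    ∀ x : ExteriorAlgebra R M, map j x + ι R φ1 * map j (ctr ψ x) = x := by
  intro x
  induction x using CliffordAlgebra.left_induction with
  | algebraMap r =>
    rw [AlgHom.commutes, ctr_algebraMap, map_zero, mul_zero, add_zero]
  | add x y hx hy =>
    rw [map_add, map_add, map_add, mul_add]
    conv_rhs => rw [← hx, ← hy]
    abel
  | ι_mul x m hx =>
    have hex : ι R φ1 * x = ι R φ1 * map j x := by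
      conv_lhs => rw [← hx]
      rw [mul_add, ← mul_assoc, ι_sq_zero, zero_mul, add_zero]
    rw [ctr_ι_mul, map_mul, map_apply_ι, map_sub, map_smul, map_mul, map_apply_ι, mul_sub]
    rw [show ι R (j m) * map j x + (ι R φ1 * (ψ m • map j x) - ι R φ1 * (ι R (j m) * map j ((ctr ψ) x)))
        = ι R (j m) * map j x + ψ m • (ι R φ1 * map j x) + (ι R (j m) * (ι R φ1 * map j ((ctr ψ) x))) from ?_]
    · rw [← hex]
      calc ι R (j m) * map j x + ψ m • (ι R φ1 * x) + ι R (j m) * (ι R φ1 * map j ((ctr ψ) x))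
          = ι R (j m) * (map j x + ι R φ1 * map j ((ctr ψ) x)) + ψ m • (ι R φ1 * x) := by
            rw [mul_add]; abel
        _ = ι R (j m) * x + ψ m • (ι R φ1 * x) := by rw [hx]
        _ = (ι R (j m) + ψ m • ι R φ1) * x := by
            rw [add_mul, smul_mul_assoc]
        _ = ι R m * x := by rw [← map_smul, ← map_add, ← hj]
    · have : ι R φ1 * ι R (j m) = -(ι R (j m) * ι R φ1) := ι_anticomm _ _
      rw [mul_smul_comm, ← mul_assoc, this, neg_mul, mul_assoc]
      abel


variable (R M) in
/-- The zeroth exterior power is `R`. -/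
noncomputable def expowZeroEquiv : ↥(⋀[R]^0 M) ≃ₗ[R] R := by
  refine (LinearEquiv.ofBijective
    (LinearMap.codRestrict (⋀[R]^0 M) (Algebra.linearMap R (ExteriorAlgebra R M))
      (fun r => by
        rw [show ⋀[R]^0 M = 1 from pow_zero _]
        exact Submodule.algebraMap_mem r)) ⟨?_, ?_⟩).symm
  · intro a b h
    exact (algebraMap_leftInverse M).injective (congrArg Subtype.val h)
  · rintro ⟨x, hx⟩
    obtain ⟨r, hr⟩ := expow_zero_mem hx
    exact ⟨r, Subtype.ext hr⟩

theorem expow_subsingleton [Subsingleton M] (n : ℕ) :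
    Subsingleton ↥(⋀[R]^(n+1) M) := by
  have hr : LinearMap.range (ι R : M →ₗ[R] ExteriorAlgebra R M) = ⊥ := by
    rw [LinearMap.range_eq_bot]
    ext m
    rw [Subsingleton.elim m 0, map_zero]; rfl
  have h : ⋀[R]^(n+1) M = ⊥ := by
    rw [show ⋀[R]^(n+1) M = (LinearMap.range (ι R : M →ₗ[R] _))^(n+1) from rfl, hr,
      ← Submodule.zero_eq_bot, zero_pow (Nat.succ_ne_zero n)]
  constructor
  rintro ⟨a, ha⟩ ⟨b, hb⟩
  rw [h] at ha hb
  simp only [Submodule.mem_bot] at ha hb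
  exact Subtype.ext (ha.trans hb.symm)

section Koszul

variable {W : Type} [AddCommGroup W] [Module R W]
variable (φ : R →ₗ[R] M) (ψ : M →ₗ[R] R) (u : W →ₗ[R] M) (p : M →ₗ[R] W)

variable (R) in
/-- Contraction as a map between exterior powers. -/
noncomputable def ctrMap (n : ℕ) : ↥(⋀[R]^(n+1) M) →ₗ[R] ↥(⋀[R]^n M) :=
  LinearMap.codRestrict _ ((ctr ψ) ∘ₗ (⋀[R]^(n+1) M).subtype)
    (fun x => ctr_mem ψ n x.1 x.2)

variable (hψφ : ψ (φ 1) = 1) (hpu : ∀ w, p (u w) = w) (hup : ∀ m, u (p m) = m - φ (ψ m))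
  (hψu : ∀ w, ψ (u w) = 0) (hpφ : p (φ 1) = 0)

include hψφ hpu hup hψu hpφ in
theorem koszulEquiv_aux (n : ℕ) : Nonempty
    (↥(⋀[R]^(n+1) M) ≃ₗ[R] (↥(⋀[R]^(n+1) W) × ↥(⋀[R]^n W))) := by
  set e : ExteriorAlgebra R M := ι R (φ 1) with he
  have hmapup : ∀ z : ExteriorAlgebra R W, map p (map u z) = z := by
    intro z
    rw [← AlgHom.comp_apply, map_comp_map,
      show p ∘ₗ u = LinearMap.id from LinearMap.ext hpu, map_id, AlgHom.id_apply]
  refine ⟨LinearEquiv.ofLinear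
    ((pmap R p (n+1)).prod ((pmap R p n) ∘ₗ ctrMap R ψ n))
    ((pmap R u (n+1)).coprod
      (LinearMap.codRestrict _
        ((LinearMap.mulLeft R e) ∘ₗ (map u).toLinearMap ∘ₗ (⋀[R]^n W).subtype)
        (fun x => ι_mul_mem _ (map_mem_pow u n x.1 x.2)))) ?_ ?_⟩
  · apply LinearMap.ext
    rintro ⟨a, b⟩
    have hDua : ctr ψ (map u (a : ExteriorAlgebra R W)) = 0 := ctr_map_eq_zero ψ u hψu _
    have hDub : ctr ψ (map u (b : ExteriorAlgebra R W)) = 0 := ctr_map_eq_zero ψ u hψu _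
    refine Prod.ext (Subtype.ext ?_) (Subtype.ext ?_)
    · show map p (map u ↑a + e * map u ↑b) = ↑a
      rw [map_add, hmapup, map_mul, he, map_apply_ι, hpφ, map_zero, zero_mul, add_zero]
    · show map p (ctr ψ (map u ↑a + e * map u ↑b)) = ↑b
      rw [map_add, hDua, he, ctr_ι_mul, hψφ, one_smul, hDub, mul_zero, sub_zero, zero_add,
        hmapup]
  · apply LinearMap.ext
    rintro ⟨x, hx⟩
    refine Subtype.ext ?_
    show map u (map p x) + e * map u (map p (ctr ψ x)) = x
    have hcomp : ∀ z : ExteriorAlgebra R M, map u (map p z) = map (u ∘ₗ p) z := by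
      intro z
      rw [← AlgHom.comp_apply, map_comp_map]
    rw [hcomp, hcomp]
    exact koszul_identity (u ∘ₗ p) (φ 1) ψ
      (fun m => by
        rw [LinearMap.comp_apply, hup]
        rw [show ψ m • φ 1 = φ (ψ m) by rw [← map_smul, smul_eq_mul, mul_one]]
        abel) x

end Koszul

theorem projective_prod (A C : Type) [AddCommGroup A] [Module R A] [AddCommGroup C] [Module R C]
    [Module.Projective R A] [Module.Projective R C] : Module.Projective R (A × C) := by
  obtain ⟨sA, hsA⟩ := Module.projective_lifting_property
    (Finsupp.linearCombination R (id : A → A)) (LinearMap.id)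
    (fun a => ⟨Finsupp.single a 1, by simp⟩)
  obtain ⟨sC, hsC⟩ := Module.projective_lifting_property
    (Finsupp.linearCombination R (id : C → C)) (LinearMap.id)
    (fun c => ⟨Finsupp.single c 1, by simp⟩)
  exact Module.Projective.of_split (sA.prodMap sC)
    ((Finsupp.linearCombination R (id : A → A)).prodMap
      (Finsupp.linearCombination R (id : C → C)))
    (by
      apply LinearMap.ext
      rintro ⟨a, c⟩
      have ha := LinearMap.congr_fun hsA a
      have hc := LinearMap.congr_fun hsC c
      simp only [LinearMap.comp_apply, LinearMap.id_apply] at ha hc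
      simp only [LinearMap.comp_apply, LinearMap.prodMap_apply, LinearMap.id_apply, ha, hc])

section FreeCase

theorem fp_of_ss (P : Type) [AddCommGroup P] [Module R P] [Subsingleton P] :
    Module.Finite R P ∧ Module.Projective R P :=
  ⟨Module.Finite.of_surjective (0 : R →ₗ[R] P) (fun x => ⟨0, Subsingleton.elim _ _⟩),
   Module.Projective.of_split (0 : P →ₗ[R] R) (0 : R →ₗ[R] P)
     (by ext x; exact Subsingleton.elim _ _)⟩

variable (R) in
noncomputable def finP (k : ℕ) : (Fin (k+1) → R) →ₗ[R] (Fin k → R) :=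
  LinearMap.funLeft R R Fin.succ

variable (R) in
noncomputable def finU (k : ℕ) : (Fin k → R) →ₗ[R] (Fin (k+1) → R) :=
  LinearMap.pi (fun i => Fin.cases (motive := fun _ => (Fin k → R) →ₗ[R] R)
    0 (fun j => LinearMap.proj j) i)

variable (R) in
noncomputable def finPhi (k : ℕ) : R →ₗ[R] (Fin (k+1) → R) :=
  LinearMap.pi (fun i => Fin.cases (motive := fun _ => R →ₗ[R] R)
    LinearMap.id 0 i)

variable (R) in
noncomputable def finPsi (k : ℕ) : (Fin (k+1) → R) →ₗ[R] R :=
  LinearMap.proj 0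

variable (R) in
theorem finU_zero (k : ℕ) (x : Fin k → R) : finU R k x 0 = 0 := by
  simp only [finU, LinearMap.pi_apply, Fin.cases_zero, LinearMap.zero_apply]

variable (R) in
theorem finU_succ (k : ℕ) (x : Fin k → R) (j : Fin k) : finU R k x (Fin.succ j) = x j := by
  simp only [finU, LinearMap.pi_apply, Fin.cases_succ, LinearMap.proj_apply]

variable (R) in
theorem finPhi_zero (k : ℕ) (r : R) : finPhi R k r 0 = r := by
  simp only [finPhi, LinearMap.pi_apply, Fin.cases_zero, LinearMap.id_apply]

variable (R) in
theorem finPhi_succ (k : ℕ) (r : R) (j : Fin k) : finPhi R k r (Fin.succ j) = 0 := by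
  simp only [finPhi, LinearMap.pi_apply, Fin.cases_succ, Pi.zero_apply, LinearMap.zero_apply]

variable (R) in
theorem expow_fin_fp : ∀ (k n : ℕ),
    Module.Finite R ↥(⋀[R]^n (Fin k → R)) ∧ Module.Projective R ↥(⋀[R]^n (Fin k → R)) := by
  have hzero : ∀ (P : Type) [AddCommGroup P] [Module R P],
      Module.Finite R ↥(⋀[R]^0 P) ∧ Module.Projective R ↥(⋀[R]^0 P) := by
    intro P _ _
    exact ⟨Module.Finite.equiv (expowZeroEquiv R P).symm,
      Module.Projective.of_equiv (expowZeroEquiv R P).symm⟩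
  have hss : ∀ (P : Type) [AddCommGroup P] [Module R P] [Subsingleton P] (n : ℕ),
      Module.Finite R ↥(⋀[R]^(n+1) P) ∧ Module.Projective R ↥(⋀[R]^(n+1) P) := by
    intro P _ _ _ n
    have := expow_subsingleton (R := R) (M := P) n
    exact fp_of_ss _
  intro k
  induction k with
  | zero =>
    rintro (_ | n)
    · exact hzero _
    · exact hss _ n
  | succ k ih =>
    rintro (_ | n)
    · exact hzero _
    · have hψφ : finPsi R k (finPhi R k 1) = 1 := finPhi_zero R k 1
      have hpu : ∀ w, finP R k (finU R k w) = w := fun w => by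
        funext j; exact finU_succ R k w j
      have hup : ∀ m, finU R k (finP R k m) = m - finPhi R k (finPsi R k m) := fun m => by
        funext i
        refine Fin.cases ?_ (fun j => ?_) i
        · rw [finU_zero R]
          show (0 : R) = m 0 - finPhi R k (m 0) 0
          rw [finPhi_zero R]; ring
        · rw [finU_succ R]
          show finP R k m j = m (Fin.succ j) - finPhi R k (m 0) (Fin.succ j)
          rw [finPhi_succ R]
          show m (Fin.succ j) = m (Fin.succ j) - 0
          ring
      have hψu : ∀ w, finPsi R k (finU R k w) = 0 := fun w => finU_zero R k w
      have hpφ : finP R k (finPhi R k 1) = 0 := by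
        funext j; exact finPhi_succ R k 1 j
      obtain ⟨e⟩ := koszulEquiv_aux (finPhi R k) (finPsi R k) (finU R k) (finP R k)
        hψφ hpu hup hψu hpφ n
      obtain ⟨h1f, h1p⟩ := ih (n+1)
      obtain ⟨h2f, h2p⟩ := ih n
      constructor
      · exact Module.Finite.equiv e.symm
      · have := projective_prod (R := R) ↥(⋀[R]^(n+1) (Fin k → R)) ↥(⋀[R]^n (Fin k → R))
        exact Module.Projective.of_equiv e.symm

end FreeCase

section Transfer

variable (R) in
theorem expow_fp (M : Type) [AddCommGroup M] [Module R M] [Module.Finite R M]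
    [Module.Projective R M] (n : ℕ) :
    Module.Finite R ↥(⋀[R]^n M) ∧ Module.Projective R ↥(⋀[R]^n M) := by
  obtain ⟨k, q, hq⟩ := Module.Finite.exists_fin' R M
  obtain ⟨σ, hσ⟩ := Module.projective_lifting_property q LinearMap.id hq
  have hret : ∀ x : ↥(⋀[R]^n M), pmap R q n (pmap R σ n x) = x := by
    intro x
    refine Subtype.ext ?_
    show map q (map σ ↑x) = ↑x
    rw [← AlgHom.comp_apply, map_comp_map, hσ, map_id, AlgHom.id_apply]
  obtain ⟨hf, hp⟩ := expow_fin_fp R k n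
  constructor
  · exact Module.Finite.of_surjective (pmap R q n) (fun x => ⟨pmap R σ n x, hret x⟩)
  · exact Module.Projective.of_split (pmap R σ n) (pmap R q n) (LinearMap.ext hret)

end Transfer


section Main

variable (R) in
theorem lambda_sum_zero (M : Type) [AddCommGroup M] [Module R M] [Module.Finite R M]
    [Module.Projective R M] (φ : R →ₗ[R] M) (ψ : M →ₗ[R] R) (hψφ : ψ (φ 1) = 1)
    (n : ℕ) (hn : ∀ i, n < i → Subsingleton ↥(⋀[R]^i M)) :
    ∑ i ∈ Finset.range (n + 1), ((-1 : ℤ) ^ i) • K0.cls R ↥(⋀[R]^i M) = 0 := by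
  have hφr : ∀ r : R, φ r = r • φ 1 := fun r => by rw [← map_smul, smul_eq_mul, mul_one]
  set W := LinearMap.ker ψ with hW
  let u : ↥W →ₗ[R] M := W.subtype
  let p : M →ₗ[R] ↥W := LinearMap.codRestrict W (LinearMap.id - φ ∘ₗ ψ) (fun m => by
    rw [LinearMap.mem_ker, LinearMap.sub_apply, LinearMap.comp_apply, LinearMap.id_apply,
      map_sub, hφr (ψ m), map_smul, hψφ, smul_eq_mul, mul_one, sub_self])
  have hψu : ∀ w : ↥W, ψ (u w) = 0 := fun w => w.2
  have hup : ∀ m, u (p m) = m - φ (ψ m) := fun m => rfl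
  have hpu : ∀ w : ↥W, p (u w) = w := fun w => by
    refine Subtype.ext ?_
    show (u w : M) - φ (ψ (u w)) = (w : M)
    rw [hψu w, map_zero, sub_zero]
    rfl
  have hpφ : p (φ 1) = 0 := by
    refine Subtype.ext ?_
    show φ 1 - φ (ψ (φ 1)) = ((0 : ↥W) : M)
    rw [hψφ]
    show φ 1 - φ 1 = 0
    rw [sub_self]
  haveI : Module.Finite R ↥W :=
    Module.Finite.of_surjective p (fun w => ⟨u w, hpu w⟩)
  haveI : Module.Projective R ↥W :=
    Module.Projective.of_split u p (LinearMap.ext hpu)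
  have hne : ∀ m : ℕ, Nonempty (↥(⋀[R]^(m+1) M) ≃ₗ[R] (↥(⋀[R]^(m+1) ↥W) × ↥(⋀[R]^m ↥W))) :=
    fun m => koszulEquiv_aux φ ψ u p hψφ hpu hup hψu hpφ m
  have instM : ∀ i, Module.Finite R ↥(⋀[R]^i M) ∧ Module.Projective R ↥(⋀[R]^i M) :=
    fun i => expow_fp R M i
  have instW : ∀ i, Module.Finite R ↥(⋀[R]^i ↥W) ∧ Module.Projective R ↥(⋀[R]^i ↥W) :=
    fun i => expow_fp R ↥W i
  have key : ∀ m : ℕ, ∑ i ∈ Finset.range (m+1), ((-1:ℤ)^i) • K0.cls R ↥(⋀[R]^i M)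
      = ((-1:ℤ)^m) • K0.cls R ↥(⋀[R]^m ↥W) := by
    intro m
    induction m with
    | zero =>
      rw [Finset.sum_range_one, pow_zero]
      haveI := (instM 0).1
      haveI := (instM 0).2
      rw [cls_congr R ((expowZeroEquiv R M).trans (expowZeroEquiv R ↥W).symm)]
    | succ m ih =>
      rw [Finset.sum_range_succ, ih]
      haveI := (instM (m+1)).1; haveI := (instM (m+1)).2
      haveI := (instW (m+1)).1; haveI := (instW (m+1)).2
      haveI := (instW m).1; haveI := (instW m).2
      rw [cls_equiv_prod R ((hne m).some)]
      have hpow : (-1:ℤ)^(m+1) = -((-1:ℤ)^m) := by ring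
      rw [hpow, smul_add, neg_smul, neg_smul]
      abel
  have hssW : Subsingleton ↥(⋀[R]^n ↥W) := by
    haveI h1 : Subsingleton ↥(⋀[R]^(n+1) M) := hn (n+1) (Nat.lt_succ_self n)
    have e := (hne n).some
    haveI : Subsingleton (↥(⋀[R]^(n+1) ↥W) × ↥(⋀[R]^n ↥W)) := e.symm.toEquiv.subsingleton
    constructor
    intro b b'
    have h2 := Subsingleton.elim (α := ↥(⋀[R]^(n+1) ↥W) × ↥(⋀[R]^n ↥W)) (0, b) (0, b')
    exact congrArg Prod.snd h2
  rw [key n, cls_zero_of_ss R _, smul_zero]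

end Main

end KoszulAux


open Finset in
/-- **Compatibility of the Koszul trivializations.**
Let `0 → V' → V → V'' → 0` be an exact sequence of finite projective modules over a
commutative ring `R`, and suppose that `V'` admits a nowhere-vanishing section
`s : R → V'` (i.e. `s` admits a retraction, so `R` splits off `V'`).  Then, under the
multiplicativity `λ₋₁(V^∨) = λ₋₁(V'^∨) · λ₋₁(V''^∨)` in `K₀(R)`, both `λ₋₁(V^∨)` and
`λ₋₁(V'^∨)` vanish, and the two resulting trivializations of `λ₋₁(V^∨)` agree:
`λ₋₁(V^∨) = 0 · λ₋₁(V''^∨) = 0`.  (The exponent bound `n` is any bound beyond which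
the exterior powers of the relevant duals vanish.) -/
theorem lambdaMinusOne_trivializations_interchange
    (R : Type) [CommRing R]
    (V' V V'' : Type) [AddCommGroup V'] [AddCommGroup V] [AddCommGroup V'']
    [Module R V'] [Module R V] [Module R V'']
    [Module.Projective R V'] [Module.Finite R V']
    [Module.Projective R V] [Module.Finite R V]
    [Module.Projective R V''] [Module.Finite R V'']
    (f : V' →ₗ[R] V) (g : V →ₗ[R] V'')
    (hf : Function.Injective f) (hg : Function.Surjective g) (hfg : Function.Exact f g)
    (s : R →ₗ[R] V') (ret : V' →ₗ[R] R) (hs : ret ∘ₗ s = LinearMap.id)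
    (n : ℕ)
    (hnV : ∀ i, n < i → Subsingleton ↥(⋀[R]^i (Module.Dual R V)))
    (hnV' : ∀ i, n < i → Subsingleton ↥(⋀[R]^i (Module.Dual R V'))) :
    (∑ i ∈ range (n + 1), ((-1 : ℤ) ^ i) • K0.cls R ↥(⋀[R]^i (Module.Dual R V)) = 0) ∧
    (∑ i ∈ range (n + 1), ((-1 : ℤ) ^ i) • K0.cls R ↥(⋀[R]^i (Module.Dual R V')) = 0) := by
  have hrets : ret (s 1) = 1 := LinearMap.congr_fun hs 1
  constructor
  · -- the V part: build a retraction `pV : V →ₗ[R] V'` of `f`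
    obtain ⟨σ, hσ⟩ := Module.projective_lifting_property g LinearMap.id hg
    have hmem : ∀ x : V, ((LinearMap.id - σ ∘ₗ g : V →ₗ[R] V)) x ∈ LinearMap.range f := by
      intro x
      refine (hfg _).mp ?_
      show g (x - σ (g x)) = 0
      have h1 : g (σ (g x)) = g x := LinearMap.congr_fun hσ (g x)
      rw [map_sub, h1, sub_self]
    let pV : V →ₗ[R] V' :=
      (LinearEquiv.ofInjective f hf).symm.toLinearMap ∘ₗ
        LinearMap.codRestrict (LinearMap.range f) (LinearMap.id - σ ∘ₗ g) hmem
    have hpf : ∀ v' : V', pV (f v') = v' := by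
      intro v'
      have hgf : g (f v') = 0 := (hfg (f v')).mpr ⟨v', rfl⟩
      show (LinearEquiv.ofInjective f hf).symm
        (LinearMap.codRestrict (LinearMap.range f) (LinearMap.id - σ ∘ₗ g) hmem (f v')) = v'
      rw [LinearEquiv.symm_apply_eq]
      refine Subtype.ext ?_
      show f v' - σ (g (f v')) = ((LinearEquiv.ofInjective f hf) v' : V)
      rw [hgf, map_zero, sub_zero]
      exact (LinearEquiv.ofInjective_apply (f := f) (h := hf) v').symm
    refine KoszulAux.lambda_sum_zero R (Module.Dual R V)
      (LinearMap.toSpanSingleton R _ (ret ∘ₗ pV)) (Module.Dual.eval R V (f (s 1))) ?_ n hnV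
    rw [LinearMap.toSpanSingleton_apply_one, Module.Dual.eval_apply, LinearMap.comp_apply, hpf, hrets]
  · refine KoszulAux.lambda_sum_zero R (Module.Dual R V')
      (LinearMap.toSpanSingleton R _ ret) (Module.Dual.eval R V' (s 1)) ?_ n hnV'
    rw [LinearMap.toSpanSingleton_apply_one, Module.Dual.eval_apply, hrets]
end

section
/- Let R be a commutative ring, E a finite free R-module of rank r with a section s : R → E whose dual s^∨ : E^∨ → R generates a regular sequence locally (a regular section). Then the Koszul complex 0 → Λ^r E^∨ → ⋯ → Λ^2 E^∨ → E^∨ → R → R/I → 0 is exact, where I = Im(s^∨) and the differential sends e_1 ∧ ⋯ ∧ e_j to Σ_i (-1)^i s^∨(e_i) e_1 ∧ ⋯ ∧ ê_i ∧ ⋯ ∧ e_j. -/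
open CliffordAlgebra


namespace KoszulAux

variable {R E : Type*} [CommRing R] [AddCommGroup E] [Module R E]

/-- The submodule of the exterior algebra spanned by monomials in `v 0, …, v (k-1)`. -/
def Mk (v : ℕ → E) : ℕ → Submodule R (ExteriorAlgebra R E)
  | 0 => Submodule.span R {1}
  | (k+1) => Mk v k ⊔ Submodule.map
      (LinearMap.mulLeft R (ι (0 : QuadraticForm R E) (v k))) (Mk v k)

lemma one_mem_Mk (v : ℕ → E) (k : ℕ) : (1 : ExteriorAlgebra R E) ∈ Mk (R := R) v k := by
  induction k with
  | zero => exact Submodule.mem_span_singleton_self 1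
  | succ k ih => exact Submodule.mem_sup_left ih

lemma Mk_mono (v : ℕ → E) {k l : ℕ} (h : k ≤ l) : Mk (R := R) v k ≤ Mk v l := by
  induction l with
  | zero => simpa [Nat.le_zero.mp h]
  | succ l ih =>
      rcases Nat.lt_or_ge k (l+1) with h' | h'
      · exact le_trans (ih (Nat.lt_succ_iff.mp h')) le_sup_left
      · have : k = l + 1 := le_antisymm h h'
        simp [this]

lemma contract_mem_Mk (v : ℕ → E) (σ : Module.Dual R E) (k : ℕ) :
    ∀ x ∈ Mk (R := R) v k, contractLeft (Q := (0 : QuadraticForm R E)) σ x ∈ Mk v k := by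
  induction k with
  | zero =>
      intro x hx
      obtain ⟨c, rfl⟩ := Submodule.mem_span_singleton.mp hx
      rw [map_smul, contractLeft_one, smul_zero]
      exact (Mk v 0).zero_mem
  | succ k ih =>
      intro x hx
      obtain ⟨a, ha, m, hm, rfl⟩ := Submodule.mem_sup.mp hx
      obtain ⟨β, hβ, rfl⟩ := hm
      rw [map_add, LinearMap.mulLeft_apply, contractLeft_ι_mul]
      refine Submodule.add_mem _ (Submodule.mem_sup_left (ih a ha)) ?_
      refine Submodule.sub_mem _ (Submodule.mem_sup_left (Submodule.smul_mem _ _ hβ)) ?_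
      exact Submodule.mem_sup_right ⟨_, ih β hβ, rfl⟩

lemma contract_eq_zero_of_vanish (v : ℕ → E) (δf : Module.Dual R E) (k : ℕ)
    (h : ∀ i < k, δf (v i) = 0) :
    ∀ x ∈ Mk (R := R) v k, contractLeft (Q := (0 : QuadraticForm R E)) δf x = 0 := by
  induction k with
  | zero =>
      intro x hx
      obtain ⟨c, rfl⟩ := Submodule.mem_span_singleton.mp hx
      rw [map_smul, contractLeft_one, smul_zero]
  | succ k ih =>
      intro x hx
      obtain ⟨a, ha, m, hm, rfl⟩ := Submodule.mem_sup.mp hx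
      obtain ⟨β, hβ, rfl⟩ := hm
      have h' : ∀ i < k, δf (v i) = 0 := fun i hi => h i (Nat.lt_succ_of_lt hi)
      rw [map_add, LinearMap.mulLeft_apply, contractLeft_ι_mul, ih h' a ha,
        ih h' β hβ, h k (Nat.lt_succ_self k), mul_zero, zero_smul, sub_zero, add_zero]

/-- Uniqueness of the decomposition `α + v k ∧ β`. -/
lemma unique_decomp (v : ℕ → E) (k : ℕ) (δf : Module.Dual R E)
    (hδ1 : δf (v k) = 1) (hδ0 : ∀ i < k, δf (v i) = 0)
    {α β : ExteriorAlgebra R E} (hα : α ∈ Mk (R := R) v k) (hβ : β ∈ Mk (R := R) v k)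
    (h : α + ι (0 : QuadraticForm R E) (v k) * β = 0) : β = 0 ∧ α = 0 := by
  have h2 := congrArg (contractLeft (Q := (0 : QuadraticForm R E)) δf) h
  rw [map_add, contractLeft_ι_mul, contract_eq_zero_of_vanish v δf k hδ0 α hα,
    contract_eq_zero_of_vanish v δf k hδ0 β hβ, mul_zero, hδ1, one_smul, sub_zero,
    zero_add, map_zero] at h2
  subst h2
  constructor
  · rfl
  · simpa using h

lemma mul_mem_Mk (v : ℕ → E) (k : ℕ) :
    ∀ j < k, ∀ x ∈ Mk (R := R) v k, ι (0 : QuadraticForm R E) (v j) * x ∈ Mk v k := by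
  induction k with
  | zero => intro j hj; omega
  | succ k ih =>
      intro j hj x hx
      obtain ⟨a, ha, m, hm, rfl⟩ := Submodule.mem_sup.mp hx
      obtain ⟨β, hβ, rfl⟩ := hm
      simp only [LinearMap.mulLeft_apply]
      rw [mul_add]
      rcases Nat.lt_or_ge j k with h' | h'
      · refine Submodule.add_mem _ (Submodule.mem_sup_left (ih j h' a ha)) ?_
        have swap : ι (0 : QuadraticForm R E) (v j) * (ι (0 : QuadraticForm R E) (v k) * β)
            = ι (0 : QuadraticForm R E) (v k) * (-(ι (0 : QuadraticForm R E) (v j) * β)) := by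
          have := ExteriorAlgebra.ι_add_mul_swap (R := R) (v j) (v k)
          rw [mul_neg, ← mul_assoc, ← mul_assoc]
          rw [show (ι (0 : QuadraticForm R E) (v j) : ExteriorAlgebra R E)
            * ι (0 : QuadraticForm R E) (v k)
            = -(ι (0 : QuadraticForm R E) (v k) * ι (0 : QuadraticForm R E) (v j)) by
              rw [eq_neg_iff_add_eq_zero]; exact this]
          rw [neg_mul]
        rw [swap]
        exact Submodule.mem_sup_right ⟨_, Submodule.neg_mem _ (ih j h' β hβ), rfl⟩
      · have hjk : j = k := by omega
        subst hjk
        have : (ι (0 : QuadraticForm R E) (v j) : ExteriorAlgebra R E)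
            * (ι (0 : QuadraticForm R E) (v j) * β) = 0 := by
          rw [← mul_assoc, CliffordAlgebra.ι_sq_scalar]
          simp
        rw [this, add_zero]
        exact Submodule.mem_sup_right ⟨a, ha, rfl⟩

end KoszulAux

namespace KoszulAux

variable {R E : Type*} [CommRing R] [AddCommGroup E] [Module R E]

/-- The ideal generated by `σ (v 0), …, σ (v (k-1))`. -/
def Ic (v : ℕ → E) (σ : Module.Dual R E) (k : ℕ) : Ideal R :=
  Ideal.span ((fun i : ℕ => σ (v i)) '' Set.Iio k)

lemma ι_mem_Mk (v : ℕ → E) {i k : ℕ} (h : i < k) :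
    ι (0 : QuadraticForm R E) (v i) ∈ Mk (R := R) v k := by
  refine Mk_mono v h ?_
  exact Submodule.mem_sup_right ⟨1, one_mem_Mk v i, mul_one _⟩

lemma realize (v : ℕ → E) (σ : Module.Dual R E) (k : ℕ) :
    ∀ c ∈ Ic (R := R) v σ k, ∃ y ∈ Mk (R := R) v k,
      contractLeft (Q := (0 : QuadraticForm R E)) σ y = algebraMap R _ c := by
  intro c hc
  refine Submodule.span_induction ?_ ?_ ?_ ?_ hc
  · rintro x ⟨i, hi, rfl⟩
    exact ⟨ι (0 : QuadraticForm R E) (v i), ι_mem_Mk v hi, by simp⟩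
  · exact ⟨0, Submodule.zero_mem _, by simp⟩
  · rintro x y - - ⟨u, hu, hDu⟩ ⟨w, hw, hDw⟩
    exact ⟨u + w, (Mk v k).add_mem hu hw, by rw [map_add, hDu, hDw, map_add]⟩
  · rintro a x - ⟨u, hu, hDu⟩
    refine ⟨a • u, (Mk v k).smul_mem a hu, ?_⟩
    rw [map_smul, hDu, Algebra.smul_def, ← map_mul]
    rfl

lemma Ic_succ (v : ℕ → E) (σ : Module.Dual R E) (k : ℕ) :
    Ic (R := R) v σ (k+1) = Ideal.span {σ (v k)} ⊔ Ic v σ k := by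
  have : Set.Iio (k+1) = insert k (Set.Iio k) := by
    ext i; simp [Nat.lt_succ_iff, Nat.lt_iff_le_pred, le_iff_lt_or_eq, or_comm]
  rw [Ic, this, Set.image_insert_eq, Ideal.span_insert]
  rfl

lemma main_induction (v : ℕ → E) (σ : Module.Dual R E) (k : ℕ)
    (hdual : ∀ j < k, ∃ δf : Module.Dual R E, δf (v j) = 1 ∧ ∀ i < j, δf (v i) = 0)
    (hreg' : ∀ j < k, ∀ c : R, σ (v j) * c ∈ Ic (R := R) v σ j → c ∈ Ic (R := R) v σ j) :
    (∀ x ∈ Mk (R := R) v k, contractLeft (Q := (0 : QuadraticForm R E)) σ x = 0 →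
      ∃ y ∈ Mk (R := R) v k, ∃ c : R,
        x = contractLeft (Q := (0 : QuadraticForm R E)) σ y + algebraMap R _ c) ∧
    (∀ x ∈ Mk (R := R) v k, ∀ c : R,
      contractLeft (Q := (0 : QuadraticForm R E)) σ x = algebraMap R _ c →
      c ∈ Ic (R := R) v σ k) := by
  set D := contractLeft (Q := (0 : QuadraticForm R E)) σ with hD
  induction k with
  | zero =>
      constructor
      · intro x hx _
        obtain ⟨c, rfl⟩ := Submodule.mem_span_singleton.mp hx
        exact ⟨0, Submodule.zero_mem _, c, by simp [Algebra.algebraMap_eq_smul_one]⟩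
      · intro x hx c hc
        obtain ⟨c', rfl⟩ := Submodule.mem_span_singleton.mp hx
        have hz : D (c' • 1) = 0 := by rw [map_smul, hD, contractLeft_one, smul_zero]
        rw [hz] at hc
        have : c = 0 := by
          have hinj := ExteriorAlgebra.algebraMap_leftInverse (M := E) (R := R)
          exact hinj.injective (by simpa using hc.symm)
        simp [this]
  | succ k ih =>
      have hsmul : ∀ z : R, σ (v k) • (algebraMap R (ExteriorAlgebra R E) z)
          = algebraMap R _ (σ (v k) * z) := fun z => by rw [Algebra.smul_def, ← map_mul]
      obtain ⟨δf, hδ1, hδ0⟩ := hdual k (Nat.lt_succ_self k)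
      have hdual' : ∀ j < k, ∃ δf : Module.Dual R E, δf (v j) = 1 ∧ ∀ i < j, δf (v i) = 0 :=
        fun j hj => hdual j (Nat.lt_succ_of_lt hj)
      have hreg'' : ∀ j < k, ∀ c : R, σ (v j) * c ∈ Ic (R := R) v σ j → c ∈ Ic v σ j :=
        fun j hj => hreg' j (Nat.lt_succ_of_lt hj)
      obtain ⟨IHa, IHb⟩ := ih hdual' hreg''
      have keyD : ∀ α β : ExteriorAlgebra R E,
          D (α + ι (0 : QuadraticForm R E) (v k) * β)
            = (D α + σ (v k) • β) + ι (0 : QuadraticForm R E) (v k) * (-(D β)) := by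
        intro α β
        rw [hD, map_add, contractLeft_ι_mul, mul_neg]
        abel
      constructor
      · -- exactness (a)
        intro x hx hDx
        obtain ⟨α, hα, m, hm, rfl⟩ := Submodule.mem_sup.mp hx
        obtain ⟨β, hβ, rfl⟩ := hm
        simp only [LinearMap.mulLeft_apply] at hDx ⊢
        have h0 := keyD α β
        rw [hDx] at h0
        have huniq := unique_decomp v k δf hδ1 hδ0
          (Submodule.add_mem _ (contract_mem_Mk v σ k α hα) ((Mk v k).smul_mem _ hβ))
          ((Mk v k).neg_mem (contract_mem_Mk v σ k β hβ)) h0.symm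
        have hDβ : D β = 0 := neg_eq_zero.mp huniq.1
        have hDα : D α = -(σ (v k) • β) := eq_neg_of_add_eq_zero_left huniq.2
        obtain ⟨γ, hγ, c, hβeq⟩ := IHa β hβ hDβ
        have step1 : D (α + σ (v k) • γ) = algebraMap R _ (-(σ (v k) * c)) := by
          rw [map_add, map_smul, hDα, hβeq, smul_add, hsmul, map_neg]
          module
        have hcneg : -(σ (v k) * c) ∈ Ic (R := R) v σ k :=
          IHb (α + σ (v k) • γ)
            (Submodule.add_mem _ hα ((Mk v k).smul_mem _ hγ)) _ step1
        have hc' : c ∈ Ic (R := R) v σ k := by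
          refine hreg' k (Nat.lt_succ_self k) c ?_
          simpa using (Ic (R := R) v σ k).neg_mem hcneg
        obtain ⟨γ₂, hγ₂, hDγ₂⟩ := realize v σ k c hc'
        set γt := γ + γ₂ with hγt
        have hγtmem : γt ∈ Mk (R := R) v k := (Mk v k).add_mem hγ hγ₂
        have hβ' : β = D γt := by rw [hγt, map_add, hDγ₂, hβeq]
        have hzero : D (α + σ (v k) • γt) = 0 := by
          rw [map_add, map_smul, ← hβ', hDα]
          abel
        obtain ⟨δ', hδ', d, hαeq⟩ := IHa (α + σ (v k) • γt)
          (Submodule.add_mem _ hα ((Mk v k).smul_mem _ hγtmem)) hzero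
        refine ⟨δ' - ι (0 : QuadraticForm R E) (v k) * γt, ?_, d, ?_⟩
        · rw [sub_eq_add_neg, ← mul_neg]
          exact Submodule.add_mem _ (Submodule.mem_sup_left hδ')
            (Submodule.mem_sup_right ⟨-γt, (Mk v k).neg_mem hγtmem, rfl⟩)
        · have expand : D (δ' - ι (0 : QuadraticForm R E) (v k) * γt)
              = D δ' - σ (v k) • γt + ι (0 : QuadraticForm R E) (v k) * D γt := by
            rw [map_sub, hD, contractLeft_ι_mul]
            abel
          rw [expand, ← hβ']
          have hDδ' : D δ' = α + σ (v k) • γt - algebraMap R _ d :=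
            eq_sub_of_add_eq hαeq.symm
          rw [hDδ']
          abel
      · -- (b)
        intro x hx c hDx
        obtain ⟨α, hα, m, hm, rfl⟩ := Submodule.mem_sup.mp hx
        obtain ⟨β, hβ, rfl⟩ := hm
        simp only [LinearMap.mulLeft_apply] at hDx
        have h0 := keyD α β
        rw [hDx] at h0
        have h0' : (D α + σ (v k) • β - algebraMap R (ExteriorAlgebra R E) c)
            + ι (0 : QuadraticForm R E) (v k) * (-(D β)) = 0 := by
          rw [sub_add_eq_add_sub, ← h0, sub_self]
        have halg : (algebraMap R (ExteriorAlgebra R E) c) ∈ Mk (R := R) v k := by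
          rw [Algebra.algebraMap_eq_smul_one]
          exact (Mk v k).smul_mem _ (one_mem_Mk v k)
        have huniq := unique_decomp v k δf hδ1 hδ0
          (Submodule.sub_mem _ (Submodule.add_mem _ (contract_mem_Mk v σ k α hα)
            ((Mk v k).smul_mem _ hβ)) halg)
          ((Mk v k).neg_mem (contract_mem_Mk v σ k β hβ)) h0'
        have hDβ : D β = 0 := neg_eq_zero.mp huniq.1
        have hDα : D α + σ (v k) • β = algebraMap R _ c := sub_eq_zero.mp huniq.2
        obtain ⟨γ, hγ, a, hβeq⟩ := IHa β hβ hDβ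
        have hDα' : D α = algebraMap R _ c - σ (v k) • β := eq_sub_of_add_eq hDα
        have step1 : D (α + σ (v k) • γ) = algebraMap R _ (c - σ (v k) * a) := by
          rw [map_add, map_smul, hDα', hβeq, smul_add, hsmul, map_sub]
          module
        have hc : c - σ (v k) * a ∈ Ic (R := R) v σ k :=
          IHb (α + σ (v k) • γ)
            (Submodule.add_mem _ hα ((Mk v k).smul_mem _ hγ)) _ step1
        rw [Ic_succ]
        have h1 : c - σ (v k) * a ∈ Ideal.span {σ (v k)} ⊔ Ic (R := R) v σ k :=
          Submodule.mem_sup_right hc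
        have h2 : σ (v k) * a ∈ Ideal.span {σ (v k)} ⊔ Ic (R := R) v σ k :=
          Submodule.mem_sup_left (Ideal.mul_mem_right _ _
            (Ideal.subset_span (Set.mem_singleton _)))
        simpa using Submodule.add_mem _ h1 h2

end KoszulAux

namespace KoszulAux
variable {R E : Type*} [CommRing R] [AddCommGroup E] [Module R E]

lemma top_le_Mk (r : ℕ) (b : Module.Basis (Fin r) R E) (v : ℕ → E)
    (hv : ∀ i : Fin r, v i = b i) :
    ∀ x : ExteriorAlgebra R E, x ∈ Mk (R := R) v r := by
  have key : ∀ x : ExteriorAlgebra R E, ∀ m ∈ Mk (R := R) v r, x * m ∈ Mk (R := R) v r := by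
    intro x
    induction x using CliffordAlgebra.induction with
    | algebraMap c =>
        intro m hm
        rw [Algebra.algebraMap_eq_smul_one, smul_mul_assoc, one_mul]
        exact (Mk v r).smul_mem _ hm
    | ι y =>
        intro m hm
        have hy : y = Finset.univ.sum fun i : Fin r => b.repr y i • b i := (b.sum_repr y).symm
        rw [hy, map_sum, Finset.sum_mul]
        refine Submodule.sum_mem _ fun i _ => ?_
        rw [map_smul, smul_mul_assoc]
        refine (Mk v r).smul_mem _ ?_
        rw [← hv i]
        exact mul_mem_Mk v r i i.isLt m hm
    | mul x y hx hy =>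
        intro m hm
        rw [mul_assoc]
        exact hx _ (hy m hm)
    | add x y hx hy =>
        intro m hm
        rw [add_mul]
        exact (Mk v r).add_mem (hx m hm) (hy m hm)
  intro x
  simpa using key x 1 (one_mem_Mk v r)

end KoszulAux

namespace KoszulAux
variable {R E : Type*} [CommRing R] [AddCommGroup E] [Module R E]

lemma Ic_eq_span_range (r : ℕ) (b : Module.Basis (Fin r) R E) (σ : Module.Dual R E) (v : ℕ → E)
    (hv : ∀ i : Fin r, v i = b i) :
    Ic (R := R) v σ r = Ideal.span (Set.range fun i : Fin r => σ (b i)) := by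
  unfold Ic
  congr 1
  ext x
  constructor
  · rintro ⟨i, hi, rfl⟩
    exact ⟨⟨i, hi⟩, (congrArg σ (hv ⟨i, hi⟩)).symm⟩
  · rintro ⟨i, rfl⟩
    exact ⟨i, i.isLt, congrArg σ (hv i)⟩

lemma dual_exists (r : ℕ) (b : Module.Basis (Fin r) R E) (v : ℕ → E)
    (hv : ∀ i : Fin r, v i = b i) :
    ∀ j < r, ∃ δf : Module.Dual R E, δf (v j) = 1 ∧ ∀ i < j, δf (v i) = 0 := by
  intro j hj
  refine ⟨b.coord ⟨j, hj⟩, ?_, ?_⟩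
  · rw [hv ⟨j, hj⟩]
    simp
  · intro i hi
    rw [hv ⟨i, lt_trans hi hj⟩]
    simp only [Module.Basis.coord_apply, Module.Basis.repr_self, Finsupp.single_apply]
    have : (⟨i, lt_trans hi hj⟩ : Fin r) ≠ ⟨j, hj⟩ := by
      simp [Fin.ext_iff]; omega
    simp [this]

lemma regular_coords (r : ℕ) (b : Module.Basis (Fin r) R E) (σ : Module.Dual R E) (v : ℕ → E)
    (hv : ∀ i : Fin r, v i = b i)
    (hreg : RingTheory.Sequence.IsRegular R (List.ofFn fun i => σ (b i))) :
    ∀ j < r, ∀ c : R, σ (v j) * c ∈ Ic (R := R) v σ j → c ∈ Ic (R := R) v σ j := by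
  intro j hj c hc
  set f : Fin r → R := fun i => σ (b i) with hf
  have hlen : (List.ofFn f).length = r := List.length_ofFn (f := f)
  have hj' : j < (List.ofFn f).length := by rw [hlen]; exact hj
  have hsr := hreg.toIsWeaklyRegular.regular_mod_prev j hj'
  have hIdeal : Ideal.ofList ((List.ofFn f).take j) = Ic (R := R) v σ j := by
    unfold Ic Ideal.ofList
    congr 1
    ext x
    simp only [Set.mem_setOf_eq, List.mem_take_iff_getElem, List.getElem_ofFn, hlen]
    constructor
    · rintro ⟨i, hi, rfl⟩
      have hir : i < r := lt_of_lt_of_le hi (min_le_right _ _)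
      exact ⟨i, lt_of_lt_of_le hi (min_le_left _ _), congrArg σ (hv ⟨i, hir⟩)⟩
    · rintro ⟨i, hi, rfl⟩
      have hir : i < r := lt_trans hi hj
      exact ⟨i, lt_min hi hir, (congrArg σ (hv ⟨i, hir⟩)).symm⟩
  have hJ : (Ideal.ofList ((List.ofFn f).take j) • ⊤ : Submodule R R)
      = Ic (R := R) v σ j := by
    rw [Ideal.smul_eq_mul, Ideal.mul_top, hIdeal]
  rw [hJ] at hsr
  have hgj : (List.ofFn f)[j]'hj' = σ (v j) := by
    simp only [List.getElem_ofFn]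
    exact (congrArg σ (hv ⟨j, hj⟩)).symm
  rw [hgj] at hsr
  have h1 : σ (v j) • (Submodule.Quotient.mk c : R ⧸ Ic (R := R) v σ j)
      = σ (v j) • (0 : R ⧸ Ic (R := R) v σ j) := by
    rw [smul_zero, ← Submodule.Quotient.mk_smul, smul_eq_mul]
    exact (Submodule.Quotient.mk_eq_zero _).mpr hc
  have h2 := hsr h1
  exact (Submodule.Quotient.mk_eq_zero _).mp h2

end KoszulAux

/-- **Exactness of the Koszul complex of a regular section.**
Let `E` be a finite free `R`-module of rank `r` (with basis `b`), and
`σ : E → R` a linear form (the dual of a section) whose coordinates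
`σ(b 0), …, σ(b (r-1))` form a regular sequence in `R` (a *regular section*).
The Koszul complex `0 → Λ^r E → ⋯ → Λ² E → E → R` with differential
`e₁ ∧ ⋯ ∧ eⱼ ↦ Σᵢ (-1)ⁱ σ(eᵢ) e₁ ∧ ⋯ ∧ êᵢ ∧ ⋯ ∧ eⱼ` is the contraction operator
`D = σ ⌋ -` on the exterior algebra `Λ E` (which lowers exterior degree by one).
Exactness of the augmented complex
`0 → Λ^r E → ⋯ → E → R → R/I → 0` (where `I = Im σ = (σ(b 0), …, σ(b (r-1)))`)
is expressed by:
* `ker D = im D ⊔ R·1` (exactness in all positive exterior degrees), and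
* `im D ⊓ R·1 = I·1` (the zeroth homology is exactly `R/I`). -/
theorem koszul_complex_exact_of_regular_section
    (R : Type*) [CommRing R] (E : Type*) [AddCommGroup E] [Module R E]
    (r : ℕ) (b : Module.Basis (Fin r) R E)
    (σ : Module.Dual R E)
    (hreg : RingTheory.Sequence.IsRegular R (List.ofFn fun i => σ (b i))) :
    (LinearMap.ker (contractLeft (Q := (0 : QuadraticForm R E)) σ) =
      LinearMap.range (contractLeft (Q := (0 : QuadraticForm R E)) σ) ⊔
        Submodule.span R {(1 : ExteriorAlgebra R E)}) ∧
    (LinearMap.range (contractLeft (Q := (0 : QuadraticForm R E)) σ) ⊓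
        Submodule.span R {(1 : ExteriorAlgebra R E)} =
      Submodule.map (Algebra.linearMap R (ExteriorAlgebra R E))
        (Ideal.span (Set.range fun i => σ (b i)))) := by
  classical
  set v : ℕ → E := fun i => if h : i < r then b ⟨i, h⟩ else 0 with hvdef
  have hv : ∀ i : Fin r, v i = b i := fun i => by simp [hvdef, i.isLt]
  have hdual := KoszulAux.dual_exists r b v hv
  have hreg' := KoszulAux.regular_coords r b σ v hv hreg
  obtain ⟨Pa, Pb⟩ := KoszulAux.main_induction v σ r hdual hreg'
  have htop := KoszulAux.top_le_Mk r b v hv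
  have hIc := KoszulAux.Ic_eq_span_range r b σ v hv
  constructor
  · apply le_antisymm
    · intro x hx
      obtain ⟨y, hy, c, hxy⟩ := Pa x (htop x) (LinearMap.mem_ker.mp hx)
      rw [hxy]
      refine Submodule.add_mem _ (Submodule.mem_sup_left ⟨y, rfl⟩)
        (Submodule.mem_sup_right (Submodule.mem_span_singleton.mpr
          ⟨c, (Algebra.algebraMap_eq_smul_one c).symm⟩))
    · rw [sup_le_iff]
      constructor
      · rintro x ⟨y, rfl⟩
        exact LinearMap.mem_ker.mpr (contractLeft_contractLeft _ _)
      · rw [Submodule.span_le]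
        rintro x rfl
        exact LinearMap.mem_ker.mpr (contractLeft_one _ _)
  · apply le_antisymm
    · rintro x ⟨⟨y, rfl⟩, hx2⟩
      obtain ⟨c, hc⟩ := Submodule.mem_span_singleton.mp hx2
      have hDy : contractLeft (Q := (0 : QuadraticForm R E)) σ y = algebraMap R _ c := by
        rw [← hc, Algebra.algebraMap_eq_smul_one]
      have hcI := Pb y (htop y) c hDy
      rw [hIc] at hcI
      exact ⟨c, hcI, by rw [Algebra.linearMap_apply, ← hDy]⟩
    · rintro x ⟨c, hc, rfl⟩
      rw [← hIc] at hc
      obtain ⟨y, hy, hDy⟩ := KoszulAux.realize v σ r c hc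
      refine Submodule.mem_inf.mpr ⟨⟨y, by rw [hDy, Algebra.linearMap_apply]⟩, ?_⟩
      exact Submodule.mem_span_singleton.mpr
        ⟨c, by rw [Algebra.linearMap_apply, ← Algebra.algebraMap_eq_smul_one]⟩
end
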